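/- Fix m ≥ 1 and n ≥ 1. Suppose for each 0 ≤ p ≤ m the polynomials A_{k,p}, B_{k,p} (0 ≤ k ≤ n−1) form a level-p Padé family up to order n−1 (with A_{−1,p} := 0 and B_{−1,p} := 0 when n = 1), that c_{1,0} ≠ 0, and that there exist scalars α_n, β_n ∈ K such that A_{n,0} := (1+β_n x)A_{n−1,0} + α_n x² A_{n−2,0} and B_{n,0} := (1+β_n x)B_{n−1,0} + α_n x² B_{n−2,0} extend the level-0 family to order n; assume moreover the nondegeneracy conditions that the x^{2n−1}-coefficient of E_{n−1,0} differs from c_{2n−1,0} and the x^{2n−3}-coefficient of E_{n−2,0} differs from c_{2n−3,0}. Then there exist scalars β̌^{n,q}_0, α̌^{n,q}_0 ∈ K for q = 1,…,m such that, setting β̌^{n,q}_p := β̌^{n,q−p}_0 and α̌^{n,q}_p := α̌^{n,q−p}_0 for 1 ≤ p ≤ q−1 and β̌^{n,q}_p, α̌^{n,q}_p as given for p = 0, the polynomials A_{n,q} := (1+β_n x)A_{n−1,q} + α_n x² A_{n−2,q} + Σ_{p=0}^{q−1} ( x·β̌^{n,q}_p·A_{n−1,p} + x²·α̌^{n,q}_p·A_{n−2,p}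 ) and B_{n,q} := (1+β_n x)B_{n−1,q} + α_n x² B_{n−2,q} + Σ_{p=0}^{q−1} ( x·β̌^{n,q}_p·B_{n−1,p} + x²·α̌^{n,q}_p·B_{n−2,p} ) have degree at most n, satisfy B_{n,q}(0) = b_{0,q}, and the error E_{n,q} := A_{n,q} − Σ_{s=0}^{q} B_{n,s}·C_{2n,q−s} has zero coefficients in all degrees 0,…,2n, for every q = 1,…,m. (This is the bivariate Jacobi-type recursion of the paper's Proposition, including the copy identities for the correction coefficients.) -/

import Mathlib

open Polynomial

/-- `C_{N,k}(x) = ∑_{i=0}^{N} c_{i,k} x^i`, truncation in `x` of the bivariate series. -/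
noncomputable def truncBiv {K : Type*} [Field K] (c : ℕ → ℕ → K) (N k : ℕ) : Polynomial K :=
  ∑ i ∈ Finset.range (N + 1), Polynomial.C (c i k) * Polynomial.X ^ i

/-- Coefficient of a polynomial at an integer index (zero for negative indices). -/
noncomputable def coeffZ {K : Type*} [Field K] (p : Polynomial K) (j : ℤ) : K :=
  if 0 ≤ j then p.coeff j.toNat else 0

/-- Bivariate series coefficient at an integer first index (zero for negative indices). -/
noncomputable def cZ {K : Type*} [Field K] (c : ℕ → ℕ → K) (i : ℤ) (j : ℕ) : K :=
  if 0 ≤ i then c i.toNat j else 0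

/-- A level-`p` Padé family up to order `N` (with seeds `b`): for each `0 ≤ k ≤ N`,
`A_{k,p}`, `B_{k,p}` have degree at most `k`, `B_{k,p}(0) = b_{0,p}`, and the error
`E_{k,p} = A_{k,p} - ∑_{s=0}^{p} B_{k,s} C_{2k,p-s}` vanishes in degrees `0,…,2k`. -/
def IsLevelFamily {K : Type*} [Field K] (c : ℕ → ℕ → K) (b : ℕ → K)
    (A B : ℤ → ℕ → Polynomial K) (p N : ℕ) : Prop :=
  ∀ k : ℕ, k ≤ N →
    (A k p).natDegree ≤ k ∧ (B k p).natDegree ≤ k ∧ (B k p).coeff 0 = b p ∧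
      ∀ j ≤ 2 * k,
        ((A k p) - ∑ s ∈ Finset.range (p + 1),
            (B k s) * truncBiv c (2 * k) (p - s)).coeff j = 0

/-- The order-`n` polynomial produced by the bivariate Jacobi-type recursion at level `r`:
`(1+β_n x)·A_{n-1,r} + α_n x²·A_{n-2,r}
  + ∑_{p=0}^{r-1} ( x·β̌^{n,r}_p·A_{n-1,p} + x²·α̌^{n,r}_p·A_{n-2,p} )`,
where the copy identities `β̌^{n,r}_p = β̌^{n,r-p}_0` and `α̌^{n,r}_p = α̌^{n,r-p}_0`
are built in (so `βc q` stands for `β̌^{n,q}_0` and `αc q` for `α̌^{n,q}_0`). -/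
noncomputable def extPoly {K : Type*} [Field K] (A : ℤ → ℕ → Polynomial K) (n : ℕ)
    (αn βn : K) (βc αc : ℕ → K) (r : ℕ) : Polynomial K :=
  (1 + Polynomial.C βn * Polynomial.X) * A ((n : ℤ) - 1) r
    + Polynomial.C αn * Polynomial.X ^ 2 * A ((n : ℤ) - 2) r
    + ∑ p ∈ Finset.range r,
        (Polynomial.X * Polynomial.C (βc (r - p)) * A ((n : ℤ) - 1) p
          + Polynomial.X ^ 2 * Polynomial.C (αc (r - p)) * A ((n : ℤ) - 2) p)

set_option linter.unnecessarySeqFocus false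
set_option linter.unusedVariables false
set_option maxHeartbeats 1000000

/-- Inflated error polynomial `Ẽ_{k,r}` with truncation at `2n`. -/
noncomputable def Et {K : Type*} [Field K] (c : ℕ → ℕ → K) (A B : ℤ → ℕ → Polynomial K)
    (n : ℕ) (k : ℤ) (r : ℕ) : Polynomial K :=
  A k r - ∑ s ∈ Finset.range (r + 1), B k s * truncBiv c (2 * n) (r - s)

lemma triangle_reindex {M : Type*} [AddCommMonoid M] (r : ℕ) (f : ℕ → ℕ → ℕ → M) :
    ∑ s ∈ Finset.range (r+1), ∑ p ∈ Finset.range s, f (s-p) p (r-s)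
      = ∑ p ∈ Finset.range r, ∑ u ∈ Finset.range (p+1), f (r-p) u (p-u) := by
  rw [Finset.sum_sigma', Finset.sum_sigma']
  refine Finset.sum_nbij' (fun x => ⟨r - x.1 + x.2, x.2⟩) (fun y => ⟨r - y.1 + y.2, y.2⟩)
    ?_ ?_ ?_ ?_ ?_
  · rintro ⟨s, p⟩ h
    simp only [Finset.mem_sigma, Finset.mem_range] at h ⊢; omega
  · rintro ⟨p, u⟩ h
    simp only [Finset.mem_sigma, Finset.mem_range] at h ⊢; omega
  · rintro ⟨s, p⟩ h
    simp only [Finset.mem_sigma, Finset.mem_range] at h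
    ext <;> simp <;> omega
  · rintro ⟨p, u⟩ h
    simp only [Finset.mem_sigma, Finset.mem_range] at h
    ext <;> simp <;> omega
  · rintro ⟨s, p⟩ h
    simp only [Finset.mem_sigma, Finset.mem_range] at h
    have h1 : s - p = r - (r - s + p) := by omega
    have h2 : r - s = (r - s + p) - p := by omega
    rw [← h1, ← h2]

lemma extPoly_sub {K : Type*} [Field K] (c : ℕ → ℕ → K) (A B : ℤ → ℕ → Polynomial K)
    (n : ℕ) (αn βn : K) (βc αc : ℕ → K) (r : ℕ) :
    extPoly A n αn βn βc αc r
      - ∑ s ∈ Finset.range (r+1), extPoly B n αn βn βc αc s * truncBiv c (2*n) (r-s)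
    = (1 + C βn * X) * Et c A B n ((n:ℤ)-1) r + C αn * X^2 * Et c A B n ((n:ℤ)-2) r
      + ∑ p ∈ Finset.range r,
          (X * C (βc (r-p)) * Et c A B n ((n:ℤ)-1) p
            + X^2 * C (αc (r-p)) * Et c A B n ((n:ℤ)-2) p) := by
  have key1 : ∑ s ∈ Finset.range (r+1),
      (∑ p ∈ Finset.range s, X * (C (βc (s-p)) * B ((n:ℤ)-1) p)) * truncBiv c (2*n) (r-s)
      = ∑ p ∈ Finset.range r, ∑ u ∈ Finset.range (p+1),
          X * (C (βc (r-p)) * (B ((n:ℤ)-1) u * truncBiv c (2*n) (p-u))) := by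
    have := triangle_reindex r (fun t i j =>
      X * (C (βc t) * (B ((n:ℤ)-1) i * truncBiv c (2*n) j)))
    simp only [Finset.sum_mul, mul_assoc] at this ⊢
    exact this
  have key2 : ∑ s ∈ Finset.range (r+1),
      (∑ p ∈ Finset.range s, X ^ 2 * (C (αc (s-p)) * B ((n:ℤ)-2) p)) * truncBiv c (2*n) (r-s)
      = ∑ p ∈ Finset.range r, ∑ u ∈ Finset.range (p+1),
          X ^ 2 * (C (αc (r-p)) * (B ((n:ℤ)-2) u * truncBiv c (2*n) (p-u))) := by
    have := triangle_reindex r (fun t i j =>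
      X ^ 2 * (C (αc t) * (B ((n:ℤ)-2) i * truncBiv c (2*n) j)))
    simp only [Finset.sum_mul, mul_assoc] at this ⊢
    exact this
  simp only [extPoly, Et, add_mul, Finset.sum_add_distrib, mul_sub, sub_mul,
    Finset.mul_sum, Finset.sum_sub_distrib, mul_assoc]
  rw [key1, key2]
  abel

lemma coeff_CXk {K : Type*} [Field K] (a : K) (k j : ℕ) (p : Polynomial K) :
    (C a * X ^ k * p).coeff j = a * (if k ≤ j then p.coeff (j - k) else 0) := by
  have h : C a * X ^ k * p = (C a * p) * X ^ k := by ring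
  rw [h, coeff_mul_X_pow', coeff_C_mul]
  split <;> simp

lemma jac_coeff {K : Type*} [Field K] (βn αn : K) (βc αc : ℕ → K)
    (E1 E2 : ℕ → Polynomial K) (r j : ℕ) :
    ((1 + C βn * X) * E1 r + C αn * X^2 * E2 r + ∑ p ∈ Finset.range r,
        (X * C (βc (r-p)) * E1 p + X^2 * C (αc (r-p)) * E2 p)).coeff j
    = (E1 r).coeff j + βn * (if 1 ≤ j then (E1 r).coeff (j-1) else 0)
      + αn * (if 2 ≤ j then (E2 r).coeff (j-2) else 0)
      + ∑ p ∈ Finset.range r,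
          (βc (r-p) * (if 1 ≤ j then (E1 p).coeff (j-1) else 0)
            + αc (r-p) * (if 2 ≤ j then (E2 p).coeff (j-2) else 0)) := by
  have hx : ∀ p : ℕ, X * C (βc (r-p)) * E1 p + X^2 * C (αc (r-p)) * E2 p
      = C (βc (r-p)) * X ^ 1 * E1 p + C (αc (r-p)) * X ^ 2 * E2 p := fun p => by ring
  have e : (1 + C βn * X) * E1 r + C αn * X^2 * E2 r + ∑ p ∈ Finset.range r,
        (X * C (βc (r-p)) * E1 p + X^2 * C (αc (r-p)) * E2 p)
      = E1 r + C βn * X ^ 1 * E1 r + C αn * X ^ 2 * E2 r + ∑ p ∈ Finset.range r,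
        (C (βc (r-p)) * X ^ 1 * E1 p + C (αc (r-p)) * X ^ 2 * E2 p) := by
    simp only [hx]; ring
  rw [e]
  simp only [coeff_add, finset_sum_coeff, coeff_CXk]

lemma truncBiv_split {K : Type*} [Field K] (c : ℕ → ℕ → K) (N M j : ℕ) (h : M ≤ N) :
    truncBiv c N j = truncBiv c M j + ∑ i ∈ Finset.Ico (M+1) (N+1), C (c i j) * X^i := by
  rw [truncBiv, truncBiv, Finset.range_eq_Ico,
    ← Finset.sum_Ico_consecutive _ (Nat.zero_le (M+1)) (by omega), Finset.range_eq_Ico]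

lemma Et_coeff_zero {K : Type*} [Field K] (c : ℕ → ℕ → K) (b : ℕ → K)
    (A B : ℤ → ℕ → Polynomial K) (m n : ℕ)
    (hfam : ∀ p ≤ m, IsLevelFamily c b A B p (n - 1))
    (k : ℕ) (hk : k ≤ n - 1) (r : ℕ) (hr : r ≤ m) (j : ℕ) (hj : j ≤ 2 * k) :
    (Et c A B n (k : ℤ) r).coeff j = 0 := by
  have h4 := (hfam r hr k hk).2.2.2
  have split : Et c A B n (k : ℤ) r
      = (A (k : ℤ) r - ∑ s ∈ Finset.range (r+1), B (k : ℤ) s * truncBiv c (2*k) (r-s))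
        - ∑ s ∈ Finset.range (r+1),
            (B (k : ℤ) s * truncBiv c (2*n) (r-s) - B (k : ℤ) s * truncBiv c (2*k) (r-s)) := by
    simp only [Et, Finset.sum_sub_distrib]; abel
  rw [split, coeff_sub, h4 j hj, zero_sub, neg_eq_zero, finset_sum_coeff]
  refine Finset.sum_eq_zero fun s _ => ?_
  rw [← mul_sub, truncBiv_split c (2*n) (2*k) (r-s) (by omega), add_sub_cancel_left,
    Finset.mul_sum, finset_sum_coeff]
  refine Finset.sum_eq_zero fun i hi => ?_
  have e : B (k:ℤ) s * (C (c i (r-s)) * X^i) = (C (c i (r-s)) * B (k:ℤ) s) * X ^ i := by ring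
  rw [e, coeff_mul_X_pow']
  have : ¬ i ≤ j := by simp only [Finset.mem_Ico] at hi; omega
  rw [if_neg this]

lemma Et_top_coeff {K : Type*} [Field K] (c : ℕ → ℕ → K) (A B : ℤ → ℕ → Polynomial K)
    (n k : ℕ) (hkn : k < n) (h0 : (B (k:ℤ) 0).coeff 0 = 1) :
    (Et c A B n (k:ℤ) 0).coeff (2*k+1)
      = (A (k:ℤ) 0 - B (k:ℤ) 0 * truncBiv c (2*k) 0).coeff (2*k+1) - c (2*k+1) 0 := by
  have h1 : Et c A B n (k:ℤ) 0 = A (k:ℤ) 0 - B (k:ℤ) 0 * truncBiv c (2*n) 0 := by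
    simp [Et]
  rw [h1, truncBiv_split c (2*n) (2*k) 0 (by omega), mul_add, sub_add_eq_sub_sub, coeff_sub]
  congr 1
  rw [Finset.mul_sum, finset_sum_coeff]
  rw [Finset.sum_eq_single_of_mem (2*k+1) (by simp only [Finset.mem_Ico]; omega)]
  · have e : B (k:ℤ) 0 * (C (c (2*k+1) 0) * X^(2*k+1))
        = (C (c (2*k+1) 0) * B (k:ℤ) 0) * X ^ (2*k+1) := by ring
    rw [e, coeff_mul_X_pow', if_pos le_rfl, Nat.sub_self, coeff_C_mul, h0, mul_one]
  · intro i hi hne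
    have hni : ¬ i ≤ 2*k+1 := by simp only [Finset.mem_Ico] at hi; omega
    have e : B (k:ℤ) 0 * (C (c i 0) * X^i) = (C (c i 0) * B (k:ℤ) 0) * X ^ i := by ring
    rw [e, coeff_mul_X_pow', if_neg hni]

lemma extPoly_coeff_zero {K : Type*} [Field K] (B : ℤ → ℕ → Polynomial K) (n : ℕ)
    (αn βn : K) (βc αc : ℕ → K) (r : ℕ) :
    (extPoly B n αn βn βc αc r).coeff 0 = (B ((n:ℤ)-1) r).coeff 0 := by
  simp [extPoly, coeff_zero_eq_eval_zero, eval_finset_sum]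

lemma extPoly_natDegree_le {K : Type*} [Field K] (A : ℤ → ℕ → Polynomial K) (n : ℕ)
    (αn βn : K) (βc αc : ℕ → K) (r : ℕ) (hn2 : 2 ≤ n)
    (h1 : ∀ p ≤ r, (A ((n:ℤ)-1) p).natDegree ≤ n-1)
    (h2 : ∀ p ≤ r, (A ((n:ℤ)-2) p).natDegree ≤ n-2) :
    (extPoly A n αn βn βc αc r).natDegree ≤ n := by
  have hb : (1 + Polynomial.C βn * Polynomial.X : Polynomial K).natDegree ≤ 1 :=
    le_trans (natDegree_add_le _ _) (by
      simp only [natDegree_one]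
      exact max_le (by omega) (le_trans (natDegree_C_mul_le _ _) natDegree_X_le))
  refine le_trans (natDegree_add_le _ _)
    (max_le (le_trans (natDegree_add_le _ _) (max_le ?_ ?_)) ?_)
  · refine le_trans (natDegree_mul_le) ?_
    have := h1 r le_rfl
    omega
  · refine le_trans (natDegree_mul_le) ?_
    have hx : (Polynomial.C αn * Polynomial.X ^ 2 : Polynomial K).natDegree ≤ 2 :=
      le_trans (natDegree_C_mul_le _ _) (by simp)
    have := h2 r le_rfl
    omega
  · refine natDegree_sum_le_of_forall_le _ _ fun p hp => ?_
    have hpr : p ≤ r := le_of_lt (Finset.mem_range.mp hp)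
    refine le_trans (natDegree_add_le _ _) (max_le ?_ ?_)
    · refine le_trans (natDegree_mul_le) ?_
      have hx : (Polynomial.X * Polynomial.C (βc (r-p)) : Polynomial K).natDegree ≤ 1 :=
        le_trans natDegree_mul_le (by simp [natDegree_X_le])
      have := h1 p hpr
      omega
    · refine le_trans (natDegree_mul_le) ?_
      have hx : (Polynomial.X ^ 2 * Polynomial.C (αc (r-p)) : Polynomial K).natDegree ≤ 2 :=
        le_trans natDegree_mul_le (by simp)
      have := h2 p hpr
      omega

lemma extPoly_congr {K : Type*} [Field K] (A : ℤ → ℕ → Polynomial K) (n : ℕ)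
    (αn βn : K) (βc αc βc' αc' : ℕ → K) (r : ℕ)
    (h : ∀ t, 1 ≤ t → t ≤ r → βc t = βc' t ∧ αc t = αc' t) :
    extPoly A n αn βn βc αc r = extPoly A n αn βn βc' αc' r := by
  unfold extPoly
  congr 1
  refine Finset.sum_congr rfl fun p hp => ?_
  have hpr : p < r := Finset.mem_range.mp hp
  rw [(h (r-p) (by omega) (by omega)).1, (h (r-p) (by omega) (by omega)).2]

lemma solve2 {K : Type*} [Field K] (d1 d2 e1 e2 g : K) (h1 : d1 ≠ 0) (h2 : d2 ≠ 0) :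
    ∃ u v : K, e1 + v * d2 = 0 ∧ e2 + u * d1 + v * g = 0 := by
  refine ⟨-(e2 + (-e1/d2) * g)/d1, -e1/d2, ?_, ?_⟩
  · field_simp
    ring
  · field_simp
    ring

/-- **Bivariate Jacobi-type recursion** (the paper's Proposition): given level-`p` families
up to order `n-1` for all `p ≤ m`, a Jacobi extension of the level-`0` family to order `n`,
and the nondegeneracy conditions, there exist correction coefficients `β̌^{n,q}_0`,
`α̌^{n,q}_0` such that the recursion (with the copy identities) extends every level
`q = 1,…,m` to order `n`. -/
theorem bivariate_jacobi {K : Type*} [Field K] [CharZero K]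
    (c : ℕ → ℕ → K) (hc00 : c 0 0 = 0)
    (m n : ℕ) (hm : 1 ≤ m) (hn : 1 ≤ n)
    (b : ℕ → K) (hb0 : b 0 = 1)
    (A B : ℤ → ℕ → Polynomial K)
    (hfam : ∀ p ≤ m, IsLevelFamily c b A B p (n - 1))
    (hneg : n = 1 → ∀ p ≤ m, A (-1) p = 0 ∧ B (-1) p = 0)
    (hc10 : c 1 0 ≠ 0)
    (αn βn : K)
    (hext :
      (extPoly A n αn βn (fun _ => 0) (fun _ => 0) 0).natDegree ≤ n ∧
      (extPoly B n αn βn (fun _ => 0) (fun _ => 0) 0).natDegree ≤ n ∧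
      (extPoly B n αn βn (fun _ => 0) (fun _ => 0) 0).coeff 0 = b 0 ∧
      ∀ j ≤ 2 * n,
        (extPoly A n αn βn (fun _ => 0) (fun _ => 0) 0
          - extPoly B n αn βn (fun _ => 0) (fun _ => 0) 0 * truncBiv c (2 * n) 0).coeff j = 0)
    (hd1 : coeffZ (A ((n : ℤ) - 1) 0 - B ((n : ℤ) - 1) 0 * truncBiv c (2 * (n - 1)) 0)
        (2 * (n : ℤ) - 1) ≠ cZ c (2 * (n : ℤ) - 1) 0)
    (hd2 : coeffZ (A ((n : ℤ) - 2) 0 - B ((n : ℤ) - 2) 0 * truncBiv c (2 * (n - 2)) 0)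
        (2 * (n : ℤ) - 3) ≠ cZ c (2 * (n : ℤ) - 3) 0) :
    ∃ βc αc : ℕ → K,
      ∀ q, 1 ≤ q → q ≤ m →
        (extPoly A n αn βn βc αc q).natDegree ≤ n ∧
        (extPoly B n αn βn βc αc q).natDegree ≤ n ∧
        (extPoly B n αn βn βc αc q).coeff 0 = b q ∧
        ∀ j ≤ 2 * n,
          (extPoly A n αn βn βc αc q
            - ∑ s ∈ Finset.range (q + 1),
                extPoly B n αn βn βc αc s * truncBiv c (2 * n) (q - s)).coeff j = 0 := by
  -- dispose of n = 1 via the (degenerate) second nondegeneracy hypothesis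
  by_cases hone : n = 1
  · exfalso
    subst hone
    simp only [coeffZ, cZ] at hd2
    norm_num at hd2
  have hn2 : 2 ≤ n := by omega
  have eN1 : ((n:ℤ) - 1) = ((n-1 : ℕ) : ℤ) := by omega
  have eN2 : ((n:ℤ) - 2) = ((n-2 : ℕ) : ℤ) := by omega
  have hEt1 : ∀ r ≤ m, ∀ j ≤ 2*n-2, (Et c A B n ((n:ℤ)-1) r).coeff j = 0 := by
    intro r hr j hj
    rw [eN1]
    exact Et_coeff_zero c b A B m n hfam (n-1) le_rfl r hr j (by omega)
  have hEt2 : ∀ r ≤ m, ∀ j ≤ 2*n-4, (Et c A B n ((n:ℤ)-2) r).coeff j = 0 := by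
    intro r hr j hj
    rw [eN2]
    exact Et_coeff_zero c b A B m n hfam (n-2) (by omega) r hr j (by omega)
  have hB1c : ∀ r ≤ m, (B ((n:ℤ)-1) r).coeff 0 = b r := by
    intro r hr; rw [eN1]; exact (hfam r hr (n-1) le_rfl).2.2.1
  have hB1c0 : (B ((n:ℤ)-1) 0).coeff 0 = 1 := by rw [hB1c 0 (Nat.zero_le m), hb0]
  have hB2c0 : (B ((n:ℤ)-2) 0).coeff 0 = 1 := by
    rw [eN2, (hfam 0 (Nat.zero_le m) (n-2) (by omega)).2.2.1, hb0]
  have hd1' : (Et c A B n ((n:ℤ)-1) 0).coeff (2*n-1) ≠ 0 := by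
    have htop := Et_top_coeff c A B n (n-1) (by omega) (by rw [← eN1]; exact hB1c0)
    have e1 : 2*(n-1)+1 = 2*n-1 := by omega
    rw [e1, ← eN1] at htop
    rw [htop]
    have hz : (0:ℤ) ≤ 2*(n:ℤ)-1 := by omega
    have hzn : (2*(n:ℤ)-1).toNat = 2*n-1 := by omega
    simp only [coeffZ, cZ, if_pos hz, hzn] at hd1
    exact sub_ne_zero.mpr hd1
  have hd2' : (Et c A B n ((n:ℤ)-2) 0).coeff (2*n-3) ≠ 0 := by
    have htop := Et_top_coeff c A B n (n-2) (by omega) (by rw [← eN2]; exact hB2c0)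
    have e2 : 2*(n-2)+1 = 2*n-3 := by omega
    rw [e2, ← eN2] at htop
    rw [htop]
    have hz : (0:ℤ) ≤ 2*(n:ℤ)-3 := by omega
    have hzn : (2*(n:ℤ)-3).toNat = 2*n-3 := by omega
    simp only [coeffZ, cZ, if_pos hz, hzn] at hd2
    exact sub_ne_zero.mpr hd2
  suffices main : ∀ Q, Q ≤ m → ∃ βc αc : ℕ → K,
      ∀ q, 1 ≤ q → q ≤ Q →
        (extPoly A n αn βn βc αc q).natDegree ≤ n ∧
        (extPoly B n αn βn βc αc q).natDegree ≤ n ∧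
        (extPoly B n αn βn βc αc q).coeff 0 = b q ∧
        ∀ j ≤ 2 * n,
          (extPoly A n αn βn βc αc q
            - ∑ s ∈ Finset.range (q + 1),
                extPoly B n αn βn βc αc s * truncBiv c (2 * n) (q - s)).coeff j = 0 by
    obtain ⟨βc, αc, h⟩ := main m le_rfl
    exact ⟨βc, αc, h⟩
  intro Q
  induction Q with
  | zero => exact fun _ => ⟨fun _ => 0, fun _ => 0, fun q hq1 hq2 => absurd hq2 (by omega)⟩
  | succ Q ih =>
    intro hQm
    obtain ⟨βc, αc, hprev⟩ := ih (by omega)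
    set r := Q + 1 with hrdef
    have hrm : r ≤ m := hQm
    obtain ⟨u, v, huv1, huv2⟩ := solve2
      ((Et c A B n ((n:ℤ)-1) 0).coeff (2*n-1))
      ((Et c A B n ((n:ℤ)-2) 0).coeff (2*n-3))
      ((Et c A B n ((n:ℤ)-1) r).coeff (2*n-1)
        + βn * (Et c A B n ((n:ℤ)-1) r).coeff (2*n-2)
        + αn * (Et c A B n ((n:ℤ)-2) r).coeff (2*n-3)
        + ∑ p ∈ Finset.Ico 1 r, (βc (r-p) * (Et c A B n ((n:ℤ)-1) p).coeff (2*n-2)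
            + αc (r-p) * (Et c A B n ((n:ℤ)-2) p).coeff (2*n-3)))
      ((Et c A B n ((n:ℤ)-1) r).coeff (2*n)
        + βn * (Et c A B n ((n:ℤ)-1) r).coeff (2*n-1)
        + αn * (Et c A B n ((n:ℤ)-2) r).coeff (2*n-2)
        + ∑ p ∈ Finset.Ico 1 r, (βc (r-p) * (Et c A B n ((n:ℤ)-1) p).coeff (2*n-1)
            + αc (r-p) * (Et c A B n ((n:ℤ)-2) p).coeff (2*n-2)))
      ((Et c A B n ((n:ℤ)-2) 0).coeff (2*n-2))
      hd1' hd2'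
    refine ⟨Function.update βc r u, Function.update αc r v, ?_⟩
    have hupd : ∀ t, 1 ≤ t → t ≤ Q →
        Function.update βc r u t = βc t ∧ Function.update αc r v t = αc t := by
      intro t h1 h2
      exact ⟨Function.update_of_ne (by omega) _ _, Function.update_of_ne (by omega) _ _⟩
    intro q hq1 hqQ
    rcases Nat.lt_or_ge q r with hlt | hge
    · -- q ≤ Q : transfer from the previous stage
      have hAq := extPoly_congr A n αn βn (Function.update βc r u) (Function.update αc r v)
        βc αc q (fun t h1 h2 => hupd t h1 (by omega))
      have hBs : ∀ s ≤ q, extPoly B n αn βn (Function.update βc r u) (Function.update αc r v) s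
          = extPoly B n αn βn βc αc s := fun s hs =>
        extPoly_congr B n αn βn _ _ βc αc s (fun t h1 h2 => hupd t h1 (by omega))
      obtain ⟨g1, g2, g3, g4⟩ := hprev q hq1 (by omega)
      refine ⟨by rw [hAq]; exact g1, by rw [hBs q le_rfl]; exact g2,
        by rw [hBs q le_rfl]; exact g3, ?_⟩
      intro j hj
      have hsum : ∑ s ∈ Finset.range (q+1),
          extPoly B n αn βn (Function.update βc r u) (Function.update αc r v) s
            * truncBiv c (2*n) (q-s)
          = ∑ s ∈ Finset.range (q+1), extPoly B n αn βn βc αc s * truncBiv c (2*n) (q-s) :=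
        Finset.sum_congr rfl fun s hs => by
          rw [hBs s (by have := Finset.mem_range.mp hs; omega)]
      rw [hAq, hsum]
      exact g4 j hj
    · -- q = r : the new level
      have hq : q = r := by omega
      subst hq
      have hA1deg : ∀ p ≤ r, (A ((n:ℤ)-1) p).natDegree ≤ n-1 := by
        intro p hp; rw [eN1]; exact (hfam p (by omega) (n-1) le_rfl).1
      have hA2deg : ∀ p ≤ r, (A ((n:ℤ)-2) p).natDegree ≤ n-2 := by
        intro p hp; rw [eN2]; exact (hfam p (by omega) (n-2) (by omega)).1
      have hB1deg : ∀ p ≤ r, (B ((n:ℤ)-1) p).natDegree ≤ n-1 := by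
        intro p hp; rw [eN1]; exact (hfam p (by omega) (n-1) le_rfl).2.1
      have hB2deg : ∀ p ≤ r, (B ((n:ℤ)-2) p).natDegree ≤ n-2 := by
        intro p hp; rw [eN2]; exact (hfam p (by omega) (n-2) (by omega)).2.1
      refine ⟨extPoly_natDegree_le A n αn βn _ _ r hn2 hA1deg hA2deg,
        extPoly_natDegree_le B n αn βn _ _ r hn2 hB1deg hB2deg, ?_, ?_⟩
      · rw [extPoly_coeff_zero]
        exact hB1c r hrm
      · intro j hj
        rw [extPoly_sub c A B n αn βn _ _ r, jac_coeff]
        rcases Nat.lt_or_ge j (2*n-1) with hjlt | hjge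
        · -- low-order coefficients vanish automatically
          have z1 : (Et c A B n ((n:ℤ)-1) r).coeff j = 0 := hEt1 r hrm j (by omega)
          have z2 : (if 1 ≤ j then (Et c A B n ((n:ℤ)-1) r).coeff (j-1) else 0) = 0 := by
            split
            · exact hEt1 r hrm _ (by omega)
            · rfl
          have z3 : (if 2 ≤ j then (Et c A B n ((n:ℤ)-2) r).coeff (j-2) else 0) = 0 := by
            split
            · exact hEt2 r hrm _ (by omega)
            · rfl
          rw [z1, z2, z3, Finset.sum_eq_zero]
          · ring
          intro p hp
          have hpm : p ≤ m := by have := Finset.mem_range.mp hp; omega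
          have z4 : (if 1 ≤ j then (Et c A B n ((n:ℤ)-1) p).coeff (j-1) else 0) = 0 := by
            split
            · exact hEt1 p hpm _ (by omega)
            · rfl
          have z5 : (if 2 ≤ j then (Et c A B n ((n:ℤ)-2) p).coeff (j-2) else 0) = 0 := by
            split
            · exact hEt2 p hpm _ (by omega)
            · rfl
          rw [z4, z5]; ring
        · -- top two coefficients: solved by the choice of u, v
          simp only [eq_true (show 1 ≤ j by omega), eq_true (show 2 ≤ j by omega), if_true]
          rw [Finset.range_eq_Ico, Finset.sum_eq_sum_Ico_succ_bot (by omega : 0 < r)]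
          rw [Nat.sub_zero, Function.update_self, Function.update_self, Nat.zero_add]
          have hsz : ∑ p ∈ Finset.Ico 1 r,
              (Function.update βc r u (r-p) * (Et c A B n ((n:ℤ)-1) p).coeff (j-1)
                + Function.update αc r v (r-p) * (Et c A B n ((n:ℤ)-2) p).coeff (j-2))
              = ∑ p ∈ Finset.Ico 1 r,
              (βc (r-p) * (Et c A B n ((n:ℤ)-1) p).coeff (j-1)
                + αc (r-p) * (Et c A B n ((n:ℤ)-2) p).coeff (j-2)) := by
            refine Finset.sum_congr rfl fun p hp => ?_
            have hp' := Finset.mem_Ico.mp hp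
            rw [Function.update_of_ne (by omega) _ _, Function.update_of_ne (by omega) _ _]
          rw [hsz]
          rcases Nat.lt_or_ge j (2*n) with hjlt2 | hjge2
          · -- j = 2n - 1
            have hje : j = 2*n-1 := by omega
            subst hje
            rw [show 2*n-1-1 = 2*n-2 from by omega, show 2*n-1-2 = 2*n-3 from by omega]
            rw [hEt1 0 (Nat.zero_le m) (2*n-2) le_rfl]
            linear_combination huv1
          · -- j = 2n
            have hje : j = 2*n := by omega
            subst hje
            rw [show 2*n-1 = 2*n-1 from rfl, show 2*n-2 = 2*n-2 from rfl]
            linear_combination huv2
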